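/- Let K be a field of characteristic zero and n ≥ 2. Let S be a K-derivation of the rational function field K(x,y) such that S(x^{n−i} y^i) ∈ K[x^n, x^{n−1}y, …, x y^{n−1}, y^n] for all 0 ≤ i ≤ n. Then S(x) and S(y) are polynomials, and moreover S(x), S(y) ∈ K[x,y]_1. -/

import Mathlib

set_option maxHeartbeats 1000000
set_option synthInstance.maxHeartbeats 1000000

open MvPolynomial

/-- The `i`-th piece (`i ∈ ℤ/nℤ`) of the `n`-grading of `K[x,y]`. -/
noncomputable def gradedPiece (K : Type*) [Field K] (n : ℕ) (i : ZMod n) :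
    Submodule K (MvPolynomial (Fin 2) K) :=
  Submodule.span K {m | ∃ a b : ℕ, ((a + b : ℕ) : ZMod n) = i ∧ m = X 0 ^ a * X 1 ^ b}

/-- The Veronese subalgebra `K[xⁿ, xⁿ⁻¹y, …, xyⁿ⁻¹, yⁿ]` of `K[x,y]`. -/
noncomputable def veronese (K : Type*) [Field K] (n : ℕ) :
    Subalgebra K (MvPolynomial (Fin 2) K) :=
  Algebra.adjoin K {m | ∃ i ≤ n, m = X 0 ^ (n - i) * X 1 ^ i}

section Aux

variable {σ R : Type*} [CommSemiring R] {K : Type*} [Field K]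

lemma aux_monomial_dvd {p : MvPolynomial σ R} {s : σ →₀ ℕ}
    (h : ∀ m ∈ p.support, s ≤ m) : monomial s 1 ∣ p := by
  rw [MvPolynomial.monomial_one_dvd_iff_modMonomial_eq_zero]
  apply MvPolynomial.ext
  intro m
  by_cases hm : s ≤ m
  · rw [MvPolynomial.coeff_modMonomial_of_le _ hm, coeff_zero]
  · rw [MvPolynomial.coeff_modMonomial_of_not_le _ hm, coeff_zero]
    by_contra hc
    exact hm (h m (MvPolynomial.mem_support_iff.mpr hc))

lemma aux_dvd_support {p : MvPolynomial σ R} {s : σ →₀ ℕ}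
    (h : monomial s 1 ∣ p) : ∀ m ∈ p.support, s ≤ m := by
  obtain ⟨q, rfl⟩ := h
  intro m hm
  have hc := MvPolynomial.mem_support_iff.mp hm
  rw [coeff_monomial_mul'] at hc
  by_contra hs
  simp [hs] at hc

/-- Every monomial of `p` has total degree `≡ i [ZMod n]`. -/
def degCond (K : Type*) [Field K] (n : ℕ) (i : ZMod n) (p : MvPolynomial (Fin 2) K) : Prop :=
  ∀ m ∈ p.support, ((m 0 + m 1 : ℕ) : ZMod n) = i

lemma single_fin2_apply_sum (j : Fin 2) (c : ℕ) :
    (Finsupp.single j c) 0 + (Finsupp.single j c) 1 = c := by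
  fin_cases j <;> simp

lemma fin2_single_add_single (v : Fin 2 →₀ ℕ) :
    Finsupp.single (0 : Fin 2) (v 0) + Finsupp.single 1 (v 1) = v := by
  ext j; fin_cases j <;> simp

/-- The subalgebra of polynomials all of whose monomials have degree `≡ 0 [MOD n]`. -/
def degZeroAlg (K : Type*) [Field K] (n : ℕ) : Subalgebra K (MvPolynomial (Fin 2) K) where
  carrier := {p | degCond K n 0 p}
  mul_mem' := by
    intro p q hp hq m hm
    have := MvPolynomial.support_mul p q hm
    rw [Finset.mem_add] at this
    obtain ⟨a, ha, b, hb, rfl⟩ := this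
    have h1 := hp a ha
    have h2 := hq b hb
    simp only [Finsupp.add_apply]
    push_cast at h1 h2 ⊢
    linear_combination h1 + h2
  one_mem' := by
    intro m hm
    have : m = 0 := by
      by_contra hne
      have := MvPolynomial.mem_support_iff.mp hm
      rw [show (1 : MvPolynomial (Fin 2) K) = C 1 from rfl, coeff_C,
        if_neg (by simpa using fun h => hne h.symm)] at this
      exact this rfl
    subst this; simp
  add_mem' := by
    intro p q hp hq m hm
    rcases Finset.mem_union.mp (MvPolynomial.support_add hm) with h | h
    · exact hp m h
    · exact hq m h
  zero_mem' := by intro m hm; simp at hm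
  algebraMap_mem' := by
    intro c m hm
    have : m = 0 := by
      by_contra hne
      have := MvPolynomial.mem_support_iff.mp hm
      rw [MvPolynomial.algebraMap_eq, coeff_C, if_neg (by simpa using fun h => hne h.symm)] at this
      exact this rfl
    subst this; simp

lemma veronese_degCond {n : ℕ} {g : MvPolynomial (Fin 2) K}
    (hg : g ∈ veronese K n) : degCond K n 0 g := by
  have hle : veronese K n ≤ degZeroAlg K n := by
    apply Algebra.adjoin_le
    rintro _ ⟨i, hi, rfl⟩
    intro m hm
    classical
    rw [X_pow_eq_monomial, X_pow_eq_monomial, monomial_mul, mul_one, support_monomial] at hm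
    rw [if_neg (one_ne_zero), Finset.mem_singleton] at hm
    subst hm
    simp only [Finsupp.add_apply]
    have a0 := single_fin2_apply_sum (0 : Fin 2) (n - i)
    have a1 := single_fin2_apply_sum (1 : Fin 2) i
    have hsum : Finsupp.single (0 : Fin 2) (n-i) 0 + Finsupp.single (1 : Fin 2) i 0
        + (Finsupp.single (0 : Fin 2) (n-i) 1 + Finsupp.single (1 : Fin 2) i 1) = n := by omega
    rw [hsum, ZMod.natCast_self]
  exact hle hg

lemma degCond_mem_gradedPiece {n : ℕ} {i : ZMod n} {p : MvPolynomial (Fin 2) K}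
    (hp : degCond K n i p) : p ∈ gradedPiece K n i := by
  rw [gradedPiece, ← p.support_sum_monomial_coeff]
  apply Submodule.sum_mem
  intro v hv
  have hmv : monomial v (coeff v p)
      = (coeff v p) • (X 0 ^ (v 0) * X 1 ^ (v 1) : MvPolynomial (Fin 2) K) := by
    rw [X_pow_eq_monomial, X_pow_eq_monomial, monomial_mul, mul_one, smul_monomial, smul_eq_mul,
      mul_one, fin2_single_add_single]
  rw [hmv]
  exact Submodule.smul_mem _ _ (Submodule.subset_span ⟨v 0, v 1, hp v hv, rfl⟩)

/-- Division with grading shift. -/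
lemma extract (m : ℕ) (j k : Fin 2) (hjk : j ≠ k) (g : MvPolynomial (Fin 2) K)
    (hg : degCond K (m+2) 0 g)
    (hdvd : X j ^ (m+1) ∣ X k ^ (m+2) * g) :
    ∃ h0, g = X j ^ (m+1) * h0 ∧ degCond K (m+2) 1 h0 := by
  rw [X_pow_eq_monomial (n := j)] at hdvd
  have hsup := aux_dvd_support hdvd
  have hsupg : ∀ μ ∈ g.support, Finsupp.single j (m+1) ≤ μ := by
    intro μ hμ
    have hmem : Finsupp.single k (m+2) + μ ∈ (X k ^ (m+2) * g).support := by
      rw [MvPolynomial.mem_support_iff, X_pow_eq_monomial, coeff_monomial_mul, one_mul]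
      exact MvPolynomial.mem_support_iff.mp hμ
    have hle := hsup _ hmem
    rw [Finsupp.single_le_iff] at hle ⊢
    rw [Finsupp.add_apply, Finsupp.single_apply, if_neg (Ne.symm hjk)] at hle
    simpa using hle
  obtain ⟨h0, hh0⟩ := aux_monomial_dvd hsupg
  refine ⟨h0, by rw [X_pow_eq_monomial]; exact hh0, ?_⟩
  intro μ hμ
  have hmem : Finsupp.single j (m+1) + μ ∈ g.support := by
    rw [MvPolynomial.mem_support_iff, hh0, coeff_monomial_mul, one_mul]
    exact MvPolynomial.mem_support_iff.mp hμ
  have := hg _ hmem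
  simp only [Finsupp.add_apply] at this
  have a0 := single_fin2_apply_sum j (m+1)
  have hz : ((m+2 : ℕ) : ZMod (m+2)) = 0 := ZMod.natCast_self _
  have hrw : (Finsupp.single j (m+1)) 0 + μ 0 + ((Finsupp.single j (m+1)) 1 + μ 1)
      = (m+1) + (μ 0 + μ 1) := by omega
  rw [hrw] at this
  push_cast at this hz ⊢
  linear_combination this - hz

end Aux

set_option synthInstance.maxHeartbeats 1000000 in
/-- If a `K`-derivation `S` of `K(x,y)` sends every `x^{n-i} y^i`
(`0 ≤ i ≤ n`) into `K[xⁿ, …, yⁿ]`, then `S x` and `S y` are polynomials lying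
in `K[x,y]₁`. -/
theorem derivation_fraction_field_polynomial (K : Type*) [Field K] [CharZero K]
    (n : ℕ) (hn : 2 ≤ n)
    (S : Derivation K (FractionRing (MvPolynomial (Fin 2) K))
      (FractionRing (MvPolynomial (Fin 2) K)))
    (h : ∀ i ≤ n, ∃ g ∈ veronese K n,
      S (algebraMap (MvPolynomial (Fin 2) K) (FractionRing (MvPolynomial (Fin 2) K))
          (X 0 ^ (n - i) * X 1 ^ i))
        = algebraMap (MvPolynomial (Fin 2) K) (FractionRing (MvPolynomial (Fin 2) K)) g) :
    (∃ f ∈ gradedPiece K n 1,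
      S (algebraMap (MvPolynomial (Fin 2) K) (FractionRing (MvPolynomial (Fin 2) K)) (X 0))
        = algebraMap (MvPolynomial (Fin 2) K) (FractionRing (MvPolynomial (Fin 2) K)) f) ∧
    (∃ f ∈ gradedPiece K n 1,
      S (algebraMap (MvPolynomial (Fin 2) K) (FractionRing (MvPolynomial (Fin 2) K)) (X 1))
        = algebraMap (MvPolynomial (Fin 2) K) (FractionRing (MvPolynomial (Fin 2) K)) f) := by
  obtain ⟨m, rfl⟩ : ∃ m, n = m + 2 := ⟨n - 2, by omega⟩
  obtain ⟨g0, hg0v, e0⟩ := h 0 (by omega)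
  obtain ⟨g1, hg1v, e1⟩ := h 1 (by omega)
  obtain ⟨gp, hgpv, ep⟩ := h (m+1) (by omega)
  obtain ⟨gn, hgnv, en⟩ := h (m+2) le_rfl
  set A := algebraMap (MvPolynomial (Fin 2) K) (FractionRing (MvPolynomial (Fin 2) K)) with hA
  set a := A (X 0) with ha
  set b := A (X 1) with hb
  -- normalize the four Leibniz identities
  rw [show (X 0 ^ (m+2-0) * X 1 ^ 0 : MvPolynomial (Fin 2) K) = X 0 ^ (m+2) by norm_num,
    map_pow, Derivation.leibniz_pow] at e0
  rw [show (X 0 ^ (m+2-1) * X 1 ^ 1 : MvPolynomial (Fin 2) K) = X 0 ^ (m+1) * X 1 by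
      rw [show m+2-1 = m+1 by omega, pow_one],
    map_mul, map_pow, Derivation.leibniz, Derivation.leibniz_pow] at e1
  rw [show (X 0 ^ (m+2-(m+1)) * X 1 ^ (m+1) : MvPolynomial (Fin 2) K) = X 0 * X 1 ^ (m+1) by
      rw [show m+2-(m+1) = 1 by omega, pow_one],
    map_mul, map_pow, Derivation.leibniz, Derivation.leibniz_pow] at ep
  rw [show (X 0 ^ (m+2-(m+2)) * X 1 ^ (m+2) : MvPolynomial (Fin 2) K) = X 1 ^ (m+2) by
      rw [Nat.sub_self, pow_zero, one_mul],
    map_pow, Derivation.leibniz_pow] at en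
  have E0 : ((m : FractionRing (MvPolynomial (Fin 2) K))+2) * (a^(m+1) * S a) = A g0 := by
    rw [← e0, show m + 2 - 1 = m + 1 by omega]
    push_cast [smul_eq_mul]
    ring
  have E1 : a^(m+1) * S b + ((m : FractionRing (MvPolynomial (Fin 2) K))+1) * (b * (a^m * S a))
      = A g1 := by
    rw [← e1, show m + 1 - 1 = m by omega]
    push_cast [smul_eq_mul]
    ring
  have Ep : b^(m+1) * S a + ((m : FractionRing (MvPolynomial (Fin 2) K))+1) * (a * (b^m * S b))
      = A gp := by
    rw [← ep, show m + 1 - 1 = m by omega]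
    push_cast [smul_eq_mul]
    ring
  have En : ((m : FractionRing (MvPolynomial (Fin 2) K))+2) * (b^(m+1) * S b) = A gn := by
    rw [← en, show m + 2 - 1 = m + 1 by omega]
    push_cast [smul_eq_mul]
    ring
  -- the two key polynomial identities
  have I1F : A (X 1 ^ (m+2) * g0 + ((m+1 : ℕ) : MvPolynomial (Fin 2) K) * (X 0 ^ (m+2) * gn))
      = A (((m+2 : ℕ) : MvPolynomial (Fin 2) K) * (X 0 ^ (m+1) * (X 1 * gp))) := by
    simp only [map_add, map_mul, map_pow, map_natCast]
    rw [← E0, ← En, ← Ep]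
    push_cast
    ring
  have I2F : A (((m+1 : ℕ) : MvPolynomial (Fin 2) K) * (X 1 ^ (m+2) * g0) + X 0 ^ (m+2) * gn)
      = A (((m+2 : ℕ) : MvPolynomial (Fin 2) K) * (X 1 ^ (m+1) * (X 0 * g1))) := by
    simp only [map_add, map_mul, map_pow, map_natCast]
    rw [← E0, ← En, ← E1]
    push_cast
    ring
  have inj : Function.Injective A :=
    IsFractionRing.injective (MvPolynomial (Fin 2) K) (FractionRing (MvPolynomial (Fin 2) K))
  have I1 := inj I1F
  have I2 := inj I2F
  have D1 : X 0 ^ (m+1) ∣ X 1 ^ (m+2) * g0 :=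
    ⟨((m+2 : ℕ) : MvPolynomial (Fin 2) K) * (X 1 * gp)
      - ((m+1 : ℕ) : MvPolynomial (Fin 2) K) * (X 0 * gn), by linear_combination I1⟩
  have D2 : X 1 ^ (m+1) ∣ X 0 ^ (m+2) * gn :=
    ⟨((m+2 : ℕ) : MvPolynomial (Fin 2) K) * (X 0 * g1)
      - ((m+1 : ℕ) : MvPolynomial (Fin 2) K) * (X 1 * g0), by linear_combination I2⟩
  obtain ⟨h0, hgh0, hdc0⟩ := extract m 0 1 (by decide) g0 (veronese_degCond hg0v) D1
  obtain ⟨h1, hgh1, hdc1⟩ := extract m 1 0 (by decide) gn (veronese_degCond hgnv) D2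
  -- nonvanishing facts
  have h2K : ((m+2 : ℕ) : K) ≠ 0 := Nat.cast_ne_zero.mpr (by omega)
  have h2F : ((m : FractionRing (MvPolynomial (Fin 2) K))+2) ≠ 0 := by
    intro hc
    have : (((m+2 : ℕ) : MvPolynomial (Fin 2) K)) = 0 := by
      apply inj
      rw [map_natCast, map_zero]
      push_cast
      exact hc
    exact Nat.cast_ne_zero.mpr (by omega) this
  have hx : a ≠ 0 := by
    intro hc
    exact MvPolynomial.X_ne_zero 0 (inj (by rw [map_zero, ← ha]; exact hc))
  have hy : b ≠ 0 := by
    intro hc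
    exact MvPolynomial.X_ne_zero 1 (inj (by rw [map_zero, ← hb]; exact hc))
  have hAC : ∀ c : K, A (C c)
      = algebraMap K (FractionRing (MvPolynomial (Fin 2) K)) c := by
    intro c
    rw [IsScalarTower.algebraMap_apply K (MvPolynomial (Fin 2) K)
      (FractionRing (MvPolynomial (Fin 2) K)), MvPolynomial.algebraMap_eq, hA]
  constructor
  · refine ⟨C ((m+2 : K)⁻¹) * h0, ?_, ?_⟩
    · apply degCond_mem_gradedPiece
      intro μ hμ
      apply hdc0
      have hsub : (C ((m+2 : K)⁻¹) * h0).support ⊆ h0.support := by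
        rw [MvPolynomial.C_mul']
        exact MvPolynomial.support_smul
      exact hsub hμ
    · -- S a = A (C (m+2)⁻¹ * h0)
      have key : ((m : FractionRing (MvPolynomial (Fin 2) K))+2) * A (C ((m+2 : K)⁻¹) * h0)
          = A h0 := by
        rw [map_mul, hAC, ← mul_assoc]
        have : ((m : FractionRing (MvPolynomial (Fin 2) K))+2)
            * algebraMap K (FractionRing (MvPolynomial (Fin 2) K)) ((m+2 : K)⁻¹) = 1 := by
          have : ((m : FractionRing (MvPolynomial (Fin 2) K))+2)
              = algebraMap K (FractionRing (MvPolynomial (Fin 2) K)) (m+2 : K) := by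
            rw [show ((m : K)+2) = ((m+2 : ℕ) : K) by push_cast; ring, map_natCast]
            push_cast
            ring
          rw [this, ← map_mul, mul_inv_cancel₀ (by push_cast at h2K ⊢; exact h2K), map_one]
        rw [this, one_mul]
      have hg0h : A g0 = a^(m+1) * (((m : FractionRing (MvPolynomial (Fin 2) K))+2)
          * A (C ((m+2 : K)⁻¹) * h0)) := by
        rw [key, hgh0, map_mul, map_pow]
      apply mul_left_cancel₀ (mul_ne_zero h2F (pow_ne_zero (m+1) hx))
      rw [mul_assoc, E0, hg0h]
      ring
  · refine ⟨C ((m+2 : K)⁻¹) * h1, ?_, ?_⟩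
    · apply degCond_mem_gradedPiece
      intro μ hμ
      apply hdc1
      have hsub : (C ((m+2 : K)⁻¹) * h1).support ⊆ h1.support := by
        rw [MvPolynomial.C_mul']
        exact MvPolynomial.support_smul
      exact hsub hμ
    · have key : ((m : FractionRing (MvPolynomial (Fin 2) K))+2) * A (C ((m+2 : K)⁻¹) * h1)
          = A h1 := by
        rw [map_mul, hAC, ← mul_assoc]
        have : ((m : FractionRing (MvPolynomial (Fin 2) K))+2)
            * algebraMap K (FractionRing (MvPolynomial (Fin 2) K)) ((m+2 : K)⁻¹) = 1 := by
          have : ((m : FractionRing (MvPolynomial (Fin 2) K))+2)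
              = algebraMap K (FractionRing (MvPolynomial (Fin 2) K)) (m+2 : K) := by
            rw [show ((m : K)+2) = ((m+2 : ℕ) : K) by push_cast; ring, map_natCast]
            push_cast
            ring
          rw [this, ← map_mul, mul_inv_cancel₀ (by push_cast at h2K ⊢; exact h2K), map_one]
        rw [this, one_mul]
      have hgnh : A gn = b^(m+1) * (((m : FractionRing (MvPolynomial (Fin 2) K))+2)
          * A (C ((m+2 : K)⁻¹) * h1)) := by
        rw [key, hgh1, map_mul, map_pow]
      apply mul_left_cancel₀ (mul_ne_zero h2F (pow_ne_zero (m+1) hy))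
      rw [mul_assoc, En, hgnh]
      ring
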